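/- Let W(x) = x⁵ − 5x⁴ − 10x³ + 10x² + 5x − 1 (equivalently W(x) = (x−1)(x⁴−4x³−14x²−4x+1)). For j ∈ {0,1,2,3,4} set κ_j = 2πj/5. Then for every real x with −x·sin κ_j + cos κ_j ≠ 0 one has W( (x·cos κ_j + sin κ_j)/(−x·sin κ_j + cos κ_j) ) · (−x·sin κ_j + cos κ_j)⁵ = W(x). -/

import Mathlib

open Complex

lemma expand5 (t : ℝ) : ((t:ℂ)+I)^5 =
    ((t^5 - 10*t^3 + 5*t : ℝ) : ℂ) + ((5*t^4 - 10*t^2 + 1 : ℝ) : ℂ) * I := by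
  push_cast
  linear_combination (10*t^3 + 10*t^2*I + 5*t*(I^2-1) + I*(I^2-1)) * Complex.I_sq

theorem stmt_4 (W : ℝ → ℝ)
    (hW : ∀ x : ℝ, W x = x ^ 5 - 5 * x ^ 4 - 10 * x ^ 3 + 10 * x ^ 2 + 5 * x - 1)
    (j : ℕ) (hj : j ≤ 4) (κ : ℝ) (hκ : κ = 2 * Real.pi * j / 5) :
    ∀ x : ℝ, -x * Real.sin κ + Real.cos κ ≠ 0 →
      W ((x * Real.cos κ + Real.sin κ) / (-x * Real.sin κ + Real.cos κ))
          * (-x * Real.sin κ + Real.cos κ) ^ 5 = W x := by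
  intro x hx
  set s := Real.sin κ with hs
  set c := Real.cos κ with hc
  set d : ℝ := -x*s + c with hd
  set u : ℝ := (x*c+s)/d with hu
  have hud : u * d = x*c + s := by
    rw [hu]; field_simp
  -- rotation factor
  have hrot : ((c:ℂ) - s*I)^5 = 1 := by
    have h1 : (c:ℂ) - s*I = Complex.exp ((-κ : ℝ) * I) := by
      rw [Complex.exp_mul_I]
      push_cast
      rw [Complex.cos_neg, Complex.sin_neg, ← Complex.ofReal_cos, ← Complex.ofReal_sin]
      ring
    rw [h1, ← Complex.exp_nat_mul]
    have h5 : ((5:ℕ):ℂ) * ((((-κ):ℝ):ℂ) * I) = (Int.cast (-(j:ℤ)) : ℂ) * (2 * (Real.pi:ℂ) * I) := by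
      push_cast
      rw [hκ]
      push_cast
      ring
    rw [h5, Complex.exp_int_mul_two_pi_mul_I]
  have key : ((u:ℂ)+I)^5 * (d:ℂ)^5 = ((x:ℂ)+I)^5 := by
    have hud' : (u:ℂ) * d = x*c + s := by exact_mod_cast congrArg (Complex.ofReal) hud
    have hd' : (d:ℂ) = -x*s + c := by push_cast [hd]; ring
    have step : ((u:ℂ)+I) * d = ((x:ℂ)+I) * ((c:ℂ) - s*I) := by
      linear_combination hud' + I * hd' + (s:ℂ) * Complex.I_sq
    calc ((u:ℂ)+I)^5 * (d:ℂ)^5 = (((u:ℂ)+I) * d)^5 := by ring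
      _ = (((x:ℂ)+I) * ((c:ℂ) - s*I))^5 := by rw [step]
      _ = ((x:ℂ)+I)^5 * (((c:ℂ) - s*I))^5 := by ring
      _ = ((x:ℂ)+I)^5 := by rw [hrot]; ring
  rw [expand5 u, expand5 x] at key
  have key2 : (((u^5 - 10*u^3 + 5*u) * d^5 : ℝ) : ℂ) + (((5*u^4 - 10*u^2 + 1) * d^5 : ℝ):ℂ) * I
      = ((x^5 - 10*x^3 + 5*x : ℝ) : ℂ) + ((5*x^4 - 10*x^2 + 1 : ℝ) : ℂ) * I := by
    rw [Complex.ofReal_mul, Complex.ofReal_mul, Complex.ofReal_pow]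
    linear_combination key
  have h1 := congrArg Complex.re key2
  have h2 := congrArg Complex.im key2
  simp only [Complex.add_re, Complex.add_im, Complex.ofReal_re, Complex.ofReal_im,
    Complex.mul_re, Complex.mul_im, Complex.I_re, Complex.I_im, mul_zero, zero_mul,
    mul_one, sub_zero, add_zero, zero_add, zero_sub, neg_zero] at h1 h2
  rw [hW, hW]
  linear_combination h1 - h2
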